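/- The Euclidean dual code Q_q(f,g,h)^{perp} of the quasi-cyclic code Q_q(f,g,h) equals the quasi-cyclic code of length 2n corresponding to the R-submodule of R^2 generated by ([-hbar(x) g^perp(x)], [g^perp(x)]) and ([f^perp(x)], 0). -/

import Mathlib

open Polynomial Finset

noncomputable section

variable {F : Type*} [Field F] [DecidableEq F]

/-- The vector in `F^n` corresponding to the residue class of a polynomial
in `F[x]/(x^n-1)`: the coefficients of its canonical representative of degree `< n`. -/
def vecOf (n : ℕ) : F[X] →ₗ[F] (Fin n → F) where
  toFun a := fun i => (a %ₘ (X ^ n - 1)).coeff i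
  map_add' a b := by
    funext i
    simp [Polynomial.add_modByMonic]
  map_smul' c a := by
    funext i
    simp [Polynomial.smul_modByMonic]

/-- The quasi-cyclic code `Q_q(f,g,h)`: the `F`-subspace of `F^n × F^n ≃ F^{2n}`
corresponding to the `R`-submodule of `R²` generated by `([f],[h f])` and `(0,[g])`. -/
def QCcode (n : ℕ) (f g h : F[X]) : Submodule F ((Fin n → F) × (Fin n → F)) where
  carrier := {v | ∃ a b : F[X], v = (vecOf n (a * f), vecOf n (a * h * f + b * g))}
  zero_mem' := ⟨0, 0, by simp; rfl⟩
  add_mem' := by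
    rintro v w ⟨a1, b1, rfl⟩ ⟨a2, b2, rfl⟩
    refine ⟨a1 + a2, b1 + b2, ?_⟩
    have h1 : (a1 + a2) * f = a1 * f + a2 * f := by ring
    have h2 : (a1 + a2) * h * f + (b1 + b2) * g
        = (a1 * h * f + b1 * g) + (a2 * h * f + b2 * g) := by ring
    rw [h1, h2, map_add (vecOf n) (a1 * f) (a2 * f),
      map_add (vecOf n) (a1 * h * f + b1 * g) (a2 * h * f + b2 * g)]
    rfl
  smul_mem' := by
    rintro c v ⟨a, b, rfl⟩
    refine ⟨c • a, c • b, ?_⟩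
    have h1 : (c • a) * f = c • (a * f) := smul_mul_assoc c a f
    have h2 : (c • a) * h * f + (c • b) * g = c • (a * h * f + b * g) := by
      rw [smul_add, smul_mul_assoc, smul_mul_assoc, smul_mul_assoc]
    rw [h1, h2, map_smul, map_smul]
    rfl

/-- Hamming weight of a vector. -/
def hWt {n : ℕ} (x : Fin n → F) : ℕ := Nat.card {i : Fin n // x i ≠ 0}

/-- Hamming weight of a vector of `F^{2n}` presented as a pair. -/
def hWt2 {n : ℕ} (v : (Fin n → F) × (Fin n → F)) : ℕ := hWt v.1 + hWt v.2

/-- Symplectic weight. -/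
def sWt {n : ℕ} (v : (Fin n → F) × (Fin n → F)) : ℕ :=
  Nat.card {i : Fin n // (v.1 i, v.2 i) ≠ (0, 0)}

/-- Euclidean inner product on `F^n`. -/
def eInn {n : ℕ} (x y : Fin n → F) : F := ∑ i, x i * y i

/-- Euclidean inner product on `F^{2n}`. -/
def eInn2 {n : ℕ} (x y : (Fin n → F) × (Fin n → F)) : F := eInn x.1 y.1 + eInn x.2 y.2

/-- Symplectic inner product on `F^{2n}`. -/
def sInn {n : ℕ} (x y : (Fin n → F) × (Fin n → F)) : F :=
  ∑ i, (x.1 i * y.2 i - x.2 i * y.1 i)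

/-- Hermitian inner product on `F^{2n}` (with respect to `x ↦ x^q`). -/
def hInn2 (q : ℕ) {n : ℕ} (x y : (Fin n → F) × (Fin n → F)) : F :=
  (∑ i, x.1 i ^ q * y.1 i) + ∑ i, x.2 i ^ q * y.2 i

def sDualSet {n : ℕ} (C : Set ((Fin n → F) × (Fin n → F))) : Set ((Fin n → F) × (Fin n → F)) :=
  {x | ∀ y ∈ C, sInn x y = 0}

def eDualSet {n : ℕ} (C : Set ((Fin n → F) × (Fin n → F))) : Set ((Fin n → F) × (Fin n → F)) :=
  {x | ∀ y ∈ C, eInn2 x y = 0}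

def hDualSet (q : ℕ) {n : ℕ} (C : Set ((Fin n → F) × (Fin n → F))) :
    Set ((Fin n → F) × (Fin n → F)) :=
  {x | ∀ y ∈ C, hInn2 q x y = 0}

/-- `x^n f(1/x)` for `f` of degree `< n`. -/
def barPoly (n : ℕ) (f : F[X]) : F[X] := ∑ i ∈ f.support, C (f.coeff i) * X ^ (n - i)

/-- `f^⊥ = x^{deg f'} f'(1/x)` where `f f' = x^n - 1`. -/
def perpPoly (n : ℕ) (f : F[X]) : F[X] := ((X ^ n - 1) /ₘ f).reverse

/-- coefficientwise `q`-th power. -/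
def polyQ (q : ℕ) (f : F[X]) : F[X] := ∑ i ∈ f.support, C (f.coeff i ^ q) * X ^ i

/-- minimum Hamming weight of the cyclic code generated by `[u]`. -/
def cycDist (n : ℕ) (u : F[X]) : ℕ :=
  sInf {w | ∃ a : F[X], vecOf n (a * u) ≠ 0 ∧ w = hWt (vecOf n (a * u))}

/-- The general QC set generated by `([u₁],[v₁])` and `([u₂],[v₂])`. -/
def QCspan (n : ℕ) (u₁ v₁ u₂ v₂ : F[X]) : Set ((Fin n → F) × (Fin n → F)) :=
  {w | ∃ a b : F[X], w = (vecOf n (a * u₁ + b * u₂), vecOf n (a * v₁ + b * v₂))}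

/-- The lower bound `d_q(f,g,h)` for the symplectic weight (a rational number). -/
def dSymp (q n : ℕ) (f g h : F[X]) : ℚ :=
  min (min (min (cycDist n g : ℚ)
    (cycDist n ((X ^ n - 1) / GCDMonoid.gcd (X ^ n - 1) h) : ℚ))
    (cycDist n (GCDMonoid.lcm f (g / GCDMonoid.gcd g h)) : ℚ))
    ((cycDist n f + cycDist n (GCDMonoid.gcd (h * f) g) + ((q : ℚ) - 1) * cycDist n (GCDMonoid.gcd f g)) / q)

/-- The lower bound `d_q^e(f,g,h)` for the minimum distance. -/
def dEucl (n : ℕ) (f g h : F[X]) : ℕ :=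
  min (min (min (cycDist n g)
    (cycDist n ((X ^ n - 1) / GCDMonoid.gcd (X ^ n - 1) h)))
    (cycDist n (GCDMonoid.lcm f (g / GCDMonoid.gcd g h))))
    (cycDist n f + cycDist n (GCDMonoid.gcd (h * f) g))

/-! ### Auxiliary lemmas for stmt12 -/

section Aux

variable {n : ℕ}

lemma hMmonic (hn : 0 < n) : (X ^ n - 1 : F[X]).Monic := by
  simpa using monic_X_pow_sub_C (1 : F) hn.ne'

lemma natDegM : (X ^ n - 1 : F[X]).natDegree = n := by
  simpa using natDegree_X_pow_sub_C (n := n) (r := (1 : F))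

lemma degM (hn : 0 < n) : (X ^ n - 1 : F[X]).degree = n := by
  simpa using degree_X_pow_sub_C hn (1 : F)

/-- The polynomial of degree `< n` with coefficient vector `w`. -/
noncomputable def pOf (w : Fin n → F) : F[X] := ∑ i : Fin n, C (w i) * X ^ (i : ℕ)

lemma pOf_def (w : Fin n → F) : pOf w = ∑ i : Fin n, C (w i) * X ^ (i : ℕ) := rfl

lemma pOf_coeff (w : Fin n → F) (j : ℕ) :
    (pOf w).coeff j = if h : j < n then w ⟨j, h⟩ else 0 := by
  rw [pOf, finset_sum_coeff]
  simp only [coeff_C_mul, coeff_X_pow, mul_ite, mul_one, mul_zero]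
  split_ifs with h
  · rw [Finset.sum_eq_single (⟨j, h⟩ : Fin n)]
    · simp
    · intro b _ hb
      exact if_neg fun hjb => hb (Fin.ext (by simp [← hjb]))
    · intro hmem; exact absurd (Finset.mem_univ _) hmem
  · apply Finset.sum_eq_zero
    intro i _
    exact if_neg fun hji => h (by rw [hji]; exact i.isLt)

lemma pOf_degree_lt (hn : 0 < n) (w : Fin n → F) : (pOf w).degree < (n : WithBot ℕ) := by
  apply lt_of_le_of_lt (degree_sum_le _ _)
  rw [Finset.sup_lt_iff (by exact_mod_cast WithBot.bot_lt_coe n)]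
  intro i _
  exact lt_of_le_of_lt (degree_C_mul_X_pow_le _ _) (by exact_mod_cast i.isLt)

lemma pOf_natDegree_le (hn : 0 < n) (w : Fin n → F) : (pOf w).natDegree ≤ n :=
  natDegree_le_iff_degree_le.2 (le_of_lt (pOf_degree_lt hn w))

lemma vecOf_apply (u : F[X]) (i : Fin n) : vecOf n u i = (u %ₘ (X ^ n - 1)).coeff i := rfl

lemma vecOf_pOf (hn : 0 < n) (w : Fin n → F) : vecOf n (pOf w) = w := by
  funext i
  rw [vecOf_apply,
    (modByMonic_eq_self_iff (hMmonic hn)).2 (by rw [degM hn]; exact pOf_degree_lt hn w),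
    pOf_coeff]
  simp

lemma pOf_vecOf (hn : 0 < n) (u : F[X]) : pOf (vecOf n u) = u %ₘ (X ^ n - 1) := by
  ext j
  rw [pOf_coeff]
  split_ifs with hj
  · rfl
  · symm
    apply coeff_eq_zero_of_degree_lt
    have hlt := degree_modByMonic_lt u (hMmonic hn)
    rw [degM hn] at hlt
    exact lt_of_lt_of_le hlt (by exact_mod_cast Nat.le_of_not_lt hj)

lemma X_pow_modByMonic (hn : 0 < n) (k : ℕ) :
    (X ^ k : F[X]) %ₘ (X ^ n - 1) = X ^ (k % n) := by
  have h1 : (X ^ n - 1 : F[X]) ∣ X ^ k - X ^ (k % n) := by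
    have h2 : (X ^ k : F[X]) = ((X ^ n) ^ (k / n)) * X ^ (k % n) := by
      rw [← pow_mul, ← pow_add, Nat.div_add_mod]
    obtain ⟨c, hc⟩ : (X ^ n - 1 : F[X]) ∣ (X ^ n) ^ (k / n) - 1 := by
      simpa using sub_dvd_pow_sub_pow ((X : F[X]) ^ n) 1 (k / n)
    exact ⟨c * X ^ (k % n), by rw [h2, ← mul_assoc, ← hc]; ring⟩
  rw [modByMonic_eq_of_dvd_sub (hMmonic hn) h1,
    (modByMonic_eq_self_iff (hMmonic hn)).2
      (by rw [degM hn, degree_X_pow]; exact_mod_cast Nat.mod_lt k hn)]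

lemma coeff0_C_mul_X_pow_mod (hn : 0 < n) (c : F) (e : ℕ) :
    ((C c * X ^ e) %ₘ (X ^ n - 1)).coeff 0 = if e % n = 0 then c else 0 := by
  rw [C_mul', smul_modByMonic, X_pow_modByMonic hn, coeff_smul, coeff_X_pow, smul_eq_mul]
  by_cases h : e % n = 0
  · simp [h]
  · simp [h, Ne.symm h]

lemma eq_n_of_mod (hn : 0 < n) {x : ℕ} (h0 : 0 < x) (h2 : x < 2 * n) (hm : x % n = 0) :
    x = n := by
  obtain ⟨k, rfl⟩ := Nat.dvd_of_mod_eq_zero hm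
  have h3 : k = 1 := by
    by_contra hk
    rcases Nat.lt_or_ge k 1 with hlt | hge
    · have hk0 : k = 0 := by omega
      rw [hk0, mul_zero] at h0
      omega
    · have hk2 : 2 ≤ k := by omega
      have hle : 2 * n ≤ n * k := by
        calc 2 * n = n * 2 := by ring
        _ ≤ n * k := Nat.mul_le_mul_left n hk2
      omega
  rw [h3, mul_one]

lemma coeff0_mod_sum {ι : Type*} (s : Finset ι) (f : ι → F[X]) :
    ((∑ i ∈ s, f i) %ₘ (X ^ n - 1)).coeff 0 = ∑ i ∈ s, ((f i %ₘ (X ^ n - 1)).coeff 0) := by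
  classical
  induction s using Finset.induction with
  | empty => simp
  | insert _ _ h ih => rw [Finset.sum_insert h, Finset.sum_insert h, add_modByMonic, coeff_add, ih]

lemma reflect_sum {ι : Type*} (N : ℕ) (s : Finset ι) (f : ι → F[X]) :
    reflect N (∑ i ∈ s, f i) = ∑ i ∈ s, reflect N (f i) := by
  classical
  induction s using Finset.induction with
  | empty => simp
  | insert _ _ h ih => rw [Finset.sum_insert h, Finset.sum_insert h, reflect_add, ih]

lemma reflect_pOf (w : Fin n → F) :
    reflect n (pOf w) = ∑ i : Fin n, C (w i) * X ^ (n - (i : ℕ)) := by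
  rw [pOf, reflect_sum]
  refine Finset.sum_congr rfl fun i _ => ?_
  rw [reflect_C_mul_X_pow, revAt_le (le_of_lt i.isLt)]

lemma eInn_pOf (hn : 0 < n) (w z : Fin n → F) :
    eInn w z = ((pOf z * reflect n (pOf w)) %ₘ (X ^ n - 1)).coeff 0 := by
  have hterm : ∀ i j : Fin n,
      (((C (z i) * X ^ (i : ℕ)) * (C (w j) * X ^ (n - (j : ℕ)))) %ₘ (X ^ n - 1)).coeff 0
        = if ((i : ℕ) + (n - (j : ℕ))) % n = 0 then z i * w j else 0 := by
    intro i j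
    rw [mul_mul_mul_comm, ← C_mul, ← pow_add, coeff0_C_mul_X_pow_mod hn]
  rw [reflect_pOf, pOf_def, Finset.sum_mul_sum, coeff0_mod_sum]
  unfold eInn
  refine Finset.sum_congr rfl fun i _ => ?_
  rw [coeff0_mod_sum]
  simp only [hterm]
  rw [Finset.sum_eq_single i]
  · have hin : ((i : ℕ) + (n - (i : ℕ))) % n = 0 := by
      rw [show (i : ℕ) + (n - (i : ℕ)) = n by omega]
      exact Nat.mod_self n
    rw [if_pos hin]
    ring
  · intro j _ hj
    refine if_neg fun hmod => ?_
    have h0 : 0 < (i : ℕ) + (n - (j : ℕ)) := by have := j.isLt; omega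
    have h2 : (i : ℕ) + (n - (j : ℕ)) < 2 * n := by
      have := i.isLt; have := j.isLt; omega
    have heq := eq_n_of_mod hn h0 h2 hmod
    have hjlt := j.isLt
    exact hj (Fin.ext (show (j : ℕ) = (i : ℕ) by omega))
  · intro hmem; exact absurd (Finset.mem_univ _) hmem

lemma eInn_vecOf (hn : 0 < n) (w : Fin n → F) (u : F[X]) :
    eInn w (vecOf n u) = ((u * reflect n (pOf w)) %ₘ (X ^ n - 1)).coeff 0 := by
  have h2 : (u * reflect n (pOf w)) %ₘ (X ^ n - 1)
      = ((u %ₘ (X ^ n - 1)) * reflect n (pOf w)) %ₘ (X ^ n - 1) := by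
    apply modByMonic_eq_of_dvd_sub (hMmonic hn)
    have h3 := modByMonic_add_div u (X ^ n - 1)
    exact ⟨u /ₘ (X ^ n - 1) * reflect n (pOf w), by
      linear_combination (-(reflect n (pOf w))) * h3⟩
  rw [h2, ← pOf_vecOf hn u]
  exact eInn_pOf hn w (vecOf n u)

lemma forall_coeff0_iff (hn : 0 < n) (Q : F[X]) :
    (∀ a : F[X], ((a * Q) %ₘ (X ^ n - 1)).coeff 0 = 0) ↔ (X ^ n - 1 : F[X]) ∣ Q := by
  constructor
  · intro hA
    rw [← modByMonic_eq_zero_iff_dvd (hMmonic hn)]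
    set P := Q %ₘ (X ^ n - 1) with hPdef
    by_cases hP0 : P = 0
    · exact hP0
    have hdeg : P.degree < (n : WithBot ℕ) := by
      rw [hPdef]
      exact lt_of_lt_of_le (degree_modByMonic_lt _ (hMmonic hn)) (le_of_eq (degM hn))
    have hnd : P.natDegree < n := (natDegree_lt_iff_degree_lt hP0).2 hdeg
    ext j
    rw [coeff_zero]
    by_cases hj : j < n
    · have e1 : (X ^ (n - j) * Q) %ₘ (X ^ n - 1) = (X ^ (n - j) * P) %ₘ (X ^ n - 1) := by
        apply modByMonic_eq_of_dvd_sub (hMmonic hn)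
        have h3 := modByMonic_add_div Q (X ^ n - 1)
        refine ⟨Q /ₘ (X ^ n - 1) * X ^ (n - j), ?_⟩
        rw [hPdef]
        linear_combination (-((X : F[X]) ^ (n - j))) * h3
      have e2 : X ^ (n - j) * P = ∑ i ∈ Finset.range n, C (P.coeff i) * X ^ (n - j + i) := by
        conv_lhs => rw [P.as_sum_range' n hnd]
        rw [Finset.mul_sum]
        refine Finset.sum_congr rfl fun i _ => ?_
        rw [← C_mul_X_pow_eq_monomial, pow_add]
        ring
      have hterm : ∀ i ∈ Finset.range n,
          ((C (P.coeff i) * X ^ (n - j + i)) %ₘ (X ^ n - 1)).coeff 0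
            = if (n - j + i) % n = 0 then P.coeff i else 0 :=
        fun i _ => coeff0_C_mul_X_pow_mod hn _ _
      have hsum : (∑ i ∈ Finset.range n, if (n - j + i) % n = 0 then P.coeff i else 0)
          = P.coeff j := by
        rw [Finset.sum_eq_single j]
        · exact if_pos (by rw [show n - j + j = n by omega]; exact Nat.mod_self n)
        · intro i hi hij
          refine if_neg fun hmod => ?_
          have hi' := Finset.mem_range.1 hi
          have := eq_n_of_mod hn (x := n - j + i) (by omega) (by omega) hmod
          omega
        · intro hmem; exact absurd (Finset.mem_range.2 hj) hmem
      have := hA (X ^ (n - j))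
      rw [e1, e2, coeff0_mod_sum, Finset.sum_congr rfl hterm, hsum] at this
      exact this
    · exact coeff_eq_zero_of_degree_lt
        (lt_of_lt_of_le hdeg (by exact_mod_cast Nat.le_of_not_lt hj))
  · intro hd a
    rw [(modByMonic_eq_zero_iff_dvd (hMmonic hn)).2 (hd.mul_left a), coeff_zero]

lemma my_reflect_reflect (N : ℕ) (p : F[X]) : reflect N (reflect N p) = p := by
  ext i
  simp [coeff_reflect]

lemma natDegree_reflect_le {N : ℕ} {p : F[X]} (h : p.natDegree ≤ N) :
    (reflect N p).natDegree ≤ N := by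
  apply natDegree_le_iff_coeff_eq_zero.2
  intro m hm
  rw [coeff_reflect, revAt_eq_self_of_lt hm]
  exact coeff_eq_zero_of_natDegree_lt (lt_of_le_of_lt h hm)

lemma reverse_eq_reflect (p : F[X]) : p.reverse = reflect p.natDegree p := rfl

lemma reflectM (hn : 0 < n) : reflect n ((X : F[X]) ^ n - 1) = 1 - X ^ n := by
  have h1 : ((X : F[X]) ^ n - 1) = X ^ n - X ^ 0 := by rw [pow_zero]
  rw [h1, reflect_sub, reflect_monomial, reflect_monomial, revAt_le (le_refl n),
    revAt_zero, Nat.sub_self, pow_zero]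

lemma dvd_reflect {N : ℕ} (hn : 0 < n) (hnN : n ≤ N) {u : F[X]}
    (hu : u.natDegree ≤ N) (hd : (X ^ n - 1 : F[X]) ∣ u) :
    (X ^ n - 1 : F[X]) ∣ reflect N u := by
  obtain ⟨c, rfl⟩ := hd
  by_cases hc : c = 0
  · simp [hc]
  have hM0 : (X ^ n - 1 : F[X]) ≠ 0 := (hMmonic hn).ne_zero
  have hdc : c.natDegree ≤ N - n := by
    have hmul := natDegree_mul hM0 hc
    rw [natDegM] at hmul
    omega
  have hsplit : reflect N ((X ^ n - 1) * c)
      = reflect n ((X : F[X]) ^ n - 1) * reflect (N - n) c := by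
    rw [← reflect_mul _ _ (le_of_eq natDegM) hdc]
    congr 1
    omega
  rw [hsplit, reflectM hn]
  exact ⟨-reflect (N - n) c, by ring⟩

lemma dvd_mul_reflect_swap {k : ℕ} (hn : 0 < n) (hk : n ≤ k) (p u : F[X])
    (hu : u.natDegree ≤ k) :
    ((X ^ n - 1 : F[X]) ∣ p * reflect k u) ↔ ((X ^ n - 1 : F[X]) ∣ p.reverse * u) := by
  constructor
  · intro hd
    have h1 := dvd_reflect hn (le_trans hk (Nat.le_add_left k p.natDegree))
      (le_trans natDegree_mul_le
        (add_le_add le_rfl (natDegree_reflect_le hu))) hd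
    rwa [reflect_mul p (reflect k u) le_rfl (natDegree_reflect_le hu),
      my_reflect_reflect, ← reverse_eq_reflect] at h1
  · intro hd
    have h1 := dvd_reflect hn (le_trans hk (Nat.le_add_left k p.natDegree))
      (le_trans natDegree_mul_le
        (add_le_add (natDegree_reflect_le le_rfl) hu)) hd
    rw [reverse_eq_reflect] at hd
    have h2 : (X ^ n - 1 : F[X]) ∣ reflect (p.natDegree + k) (reflect p.natDegree p * u) :=
      dvd_reflect hn (le_trans hk (Nat.le_add_left k p.natDegree))
        (le_trans natDegree_mul_le (add_le_add (natDegree_reflect_le le_rfl) hu)) hd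
    rwa [reflect_mul (reflect p.natDegree p) u (natDegree_reflect_le le_rfl) hu,
      my_reflect_reflect] at h2

lemma M_eq_neg (hn : 0 < n) {g : F[X]} (hg : g.Monic) (hgdvd : g ∣ X ^ n - 1) :
    (X ^ n - 1 : F[X]) = -(g.reverse * ((X ^ n - 1) /ₘ g).reverse) := by
  have hfac : (X ^ n - 1 : F[X]) = g * ((X ^ n - 1) /ₘ g) := by
    conv_lhs => rw [← modByMonic_add_div (X ^ n - 1 : F[X]) g]
    rw [(modByMonic_eq_zero_iff_dvd hg).2 hgdvd, zero_add]
  have hg'0 : (X ^ n - 1 : F[X]) /ₘ g ≠ 0 := by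
    intro h0
    rw [h0, mul_zero] at hfac
    exact (hMmonic hn).ne_zero hfac
  have hdeg : g.natDegree + ((X ^ n - 1 : F[X]) /ₘ g).natDegree = n := by
    rw [← natDegree_mul hg.ne_zero hg'0, ← hfac, natDegM]
  have hkey : (1 : F[X]) - X ^ n = g.reverse * ((X ^ n - 1 : F[X]) /ₘ g).reverse := by
    calc (1 : F[X]) - X ^ n = reflect n ((X : F[X]) ^ n - 1) := (reflectM hn).symm
      _ = reflect (g.natDegree + ((X ^ n - 1 : F[X]) /ₘ g).natDegree)
          (g * ((X ^ n - 1 : F[X]) /ₘ g)) := by rw [hdeg, ← hfac]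
      _ = g.reverse * ((X ^ n - 1 : F[X]) /ₘ g).reverse := reflect_mul _ _ le_rfl le_rfl
  linear_combination -hkey

lemma reverse_ne_zero' (hn : 0 < n) {g : F[X]} (hg : g.Monic) (hgdvd : g ∣ X ^ n - 1) :
    g.reverse ≠ 0 := by
  intro h0
  have hM := M_eq_neg hn hg hgdvd
  rw [h0, zero_mul, neg_zero] at hM
  exact (hMmonic hn).ne_zero hM

lemma M_dvd_reverse_mul_iff (hn : 0 < n) {g : F[X]} (hg : g.Monic)
    (hgdvd : g ∣ X ^ n - 1) (Q : F[X]) :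
    ((X ^ n - 1 : F[X]) ∣ g.reverse * Q) ↔ ((X ^ n - 1 : F[X]) /ₘ g).reverse ∣ Q := by
  conv_lhs => rw [M_eq_neg hn hg hgdvd]
  rw [neg_dvd, mul_dvd_mul_iff_left (reverse_ne_zero' hn hg hgdvd)]

lemma barPoly_eq_reflect {h : F[X]} (hd : h.natDegree ≤ n) : barPoly n h = reflect n h := by
  ext j
  rw [barPoly, finset_sum_coeff, coeff_reflect]
  simp only [coeff_C_mul, coeff_X_pow, mul_ite, mul_one, mul_zero]
  by_cases hj : j ≤ n
  · rw [revAt_le hj]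
    rw [Finset.sum_eq_single (n - j)]
    · rw [if_pos (by omega : j = n - (n - j))]
    · intro i hi hne
      have := le_natDegree_of_mem_supp i hi
      exact if_neg (by omega)
    · intro hmem
      rw [notMem_support_iff.1 hmem]
      simp
  · rw [revAt_eq_self_of_lt (by omega)]
    have h1 : h.coeff j = 0 := coeff_eq_zero_of_natDegree_lt (by omega)
    rw [h1]
    apply Finset.sum_eq_zero
    intro i hi
    have := le_natDegree_of_mem_supp i hi
    exact if_neg (by omega)

lemma modByMonic_sub (hn : 0 < n) (p : F[X]) :
    p %ₘ (X ^ n - 1) = p - (X ^ n - 1) * (p /ₘ (X ^ n - 1)) :=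
  eq_sub_of_add_eq (modByMonic_add_div p (X ^ n - 1))

end Aux

/-- the Euclidean dual of `Q_q(f,g,h)` is the QC code generated by
`([-hbar g^⊥], [g^⊥])` and `([f^⊥], 0)`. -/
theorem stmt12 [Fintype F] (n : ℕ) (hn : 0 < n) (f g h : F[X])
    (hf : f.Monic) (hg : g.Monic) (hh : h.Monic)
    (hfd : f.degree < n) (hgd : g.degree < n) (hhd : h.degree < n)
    (hfdvd : f ∣ X ^ n - 1) (hgdvd : g ∣ X ^ n - 1) :
    eDualSet (QCcode n f g h : Set ((Fin n → F) × (Fin n → F))) =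
      QCspan n (-(barPoly n h) * perpPoly n g) (perpPoly n g) (perpPoly n f) 0 := by
  have hhnd : h.natDegree ≤ n := natDegree_le_iff_degree_le.2 (le_of_lt hhd)
  have memQC : ∀ v : (Fin n → F) × (Fin n → F),
      v ∈ (QCcode n f g h : Set ((Fin n → F) × (Fin n → F))) ↔
        ∃ a b : F[X], v = (vecOf n (a * f), vecOf n (a * h * f + b * g)) :=
    fun v => Iff.rfl
  ext x
  obtain ⟨x1, x2⟩ := x
  set P1 := pOf x1 with hP1def
  set P2 := pOf x2 with hP2def
  have hP1nd : P1.natDegree ≤ n := pOf_natDegree_le hn x1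
  have hP2nd : P2.natDegree ≤ n := pOf_natDegree_le hn x2
  set V1 := reflect n P1 with hV1def
  set V2 := reflect n P2 with hV2def
  have hmem : (x1, x2) ∈ eDualSet (QCcode n f g h : Set ((Fin n → F) × (Fin n → F))) ↔
      ∀ a b : F[X], eInn x1 (vecOf n (a * f)) + eInn x2 (vecOf n (a * h * f + b * g)) = 0 := by
    constructor
    · intro hx a b
      exact hx _ ((memQC _).2 ⟨a, b, rfl⟩)
    · intro hx v hv
      obtain ⟨a, b, rfl⟩ := (memQC v).1 hv
      exact hx a b
  have key : ∀ a b : F[X],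
      eInn x1 (vecOf n (a * f)) + eInn x2 (vecOf n (a * h * f + b * g))
        = ((a * (f * (V1 + h * V2)) + b * (g * V2)) %ₘ (X ^ n - 1)).coeff 0 := by
    intro a b
    rw [eInn_vecOf hn, eInn_vecOf hn, ← coeff_add, ← add_modByMonic, ← hP1def, ← hP2def,
      ← hV1def, ← hV2def]
    have hring : a * f * V1 + (a * h * f + b * g) * V2
        = a * (f * (V1 + h * V2)) + b * (g * V2) := by ring
    rw [hring]
  have hmem2 : (x1, x2) ∈ eDualSet (QCcode n f g h : Set ((Fin n → F) × (Fin n → F))) ↔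
      (∀ a : F[X], ((a * (f * (V1 + h * V2))) %ₘ (X ^ n - 1)).coeff 0 = 0) ∧
      (∀ b : F[X], ((b * (g * V2)) %ₘ (X ^ n - 1)).coeff 0 = 0) := by
    rw [hmem]
    constructor
    · intro H
      constructor
      · intro a
        have hh0 := H a 0
        rw [key a 0] at hh0
        simpa using hh0
      · intro b
        have hh0 := H 0 b
        rw [key 0 b] at hh0
        simpa using hh0
    · rintro ⟨H1, H2⟩ a b
      rw [key a b, add_modByMonic, coeff_add]
      have e1 := H1 a
      have e2 := H2 b
      rw [e1, e2, add_zero]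
  have hcond2 : ((X ^ n - 1 : F[X]) ∣ g * V2) ↔ perpPoly n g ∣ P2 := by
    rw [hV2def, dvd_mul_reflect_swap hn le_rfl g P2 hP2nd,
      M_dvd_reverse_mul_iff hn hg hgdvd]
    rfl
  have hrefl2n : reflect (n + n) (P1 * X ^ n + reflect n h * P2) = V1 + h * V2 := by
    rw [reflect_add, reflect_mul P1 (X ^ n) hP1nd (le_of_eq (natDegree_X_pow n)),
      reflect_mul (reflect n h) P2 (natDegree_reflect_le hhnd) hP2nd,
      reflect_monomial, revAt_le (le_refl n), Nat.sub_self, pow_zero, mul_one,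
      my_reflect_reflect, ← hV1def, ← hV2def]
  have hbignd : (P1 * X ^ n + reflect n h * P2).natDegree ≤ n + n := by
    refine le_trans (natDegree_add_le _ _) (max_le ?_ ?_)
    · exact le_trans natDegree_mul_le (by rw [natDegree_X_pow]; omega)
    · exact le_trans natDegree_mul_le (add_le_add (natDegree_reflect_le hhnd) hP2nd)
  have hcond1 : ((X ^ n - 1 : F[X]) ∣ f * (V1 + h * V2)) ↔
      perpPoly n f ∣ (P1 + reflect n h * P2) := by
    rw [← hrefl2n, dvd_mul_reflect_swap hn (by omega) f _ hbignd]
    have hsplit : f.reverse * (P1 * X ^ n + reflect n h * P2)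
        = (X ^ n - 1) * (f.reverse * P1) + f.reverse * (P1 + reflect n h * P2) := by
      ring
    rw [hsplit, dvd_add_right (dvd_mul_right _ _),
      M_dvd_reverse_mul_iff hn hf hfdvd]
    rfl
  have hMdvdg : perpPoly n g ∣ (X ^ n - 1 : F[X]) := by
    refine ⟨-g.reverse, ?_⟩
    rw [M_eq_neg hn hg hgdvd]
    show -(g.reverse * ((X ^ n - 1) /ₘ g).reverse)
      = ((X ^ n - 1) /ₘ g).reverse * -g.reverse
    ring
  have hMdvdf : perpPoly n f ∣ (X ^ n - 1 : F[X]) := by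
    refine ⟨-f.reverse, ?_⟩
    rw [M_eq_neg hn hf hfdvd]
    show -(f.reverse * ((X ^ n - 1) /ₘ f).reverse)
      = ((X ^ n - 1) /ₘ f).reverse * -f.reverse
    ring
  have memSpan : (x1, x2) ∈ QCspan n (-(barPoly n h) * perpPoly n g) (perpPoly n g)
      (perpPoly n f) 0 ↔ ∃ a b : F[X],
      (x1, x2) = (vecOf n (a * (-(barPoly n h) * perpPoly n g) + b * perpPoly n f),
        vecOf n (a * perpPoly n g + b * 0)) := Iff.rfl
  rw [hmem2, forall_coeff0_iff hn, forall_coeff0_iff hn, hcond1, hcond2, memSpan]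
  constructor
  · rintro ⟨⟨b, hb⟩, ⟨a, ha⟩⟩
    refine ⟨a, b, ?_⟩
    have e2 : a * perpPoly n g + b * 0 = P2 := by rw [ha]; ring
    have e1 : a * (-(barPoly n h) * perpPoly n g) + b * perpPoly n f = P1 := by
      rw [barPoly_eq_reflect hhnd]
      linear_combination (reflect n h) * ha - hb
    rw [e1, e2, hP1def, hP2def, vecOf_pOf hn, vecOf_pOf hn]
  · rintro ⟨a, b, hx⟩
    rw [Prod.mk.injEq] at hx
    obtain ⟨hx1, hx2⟩ := hx
    have hpx2 : P2 = (a * perpPoly n g + b * 0) %ₘ (X ^ n - 1) := by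
      rw [hP2def, hx2, pOf_vecOf hn]
    have hpx1 : P1 = (a * (-(barPoly n h) * perpPoly n g) + b * perpPoly n f)
        %ₘ (X ^ n - 1) := by
      rw [hP1def, hx1, pOf_vecOf hn]
    rw [barPoly_eq_reflect hhnd] at hpx1
    constructor
    · rw [hpx1, hpx2, modByMonic_sub hn, modByMonic_sub hn]
      obtain ⟨c, hc⟩ := hMdvdf
      refine ⟨b - c * ((a * (-(reflect n h) * perpPoly n g) + b * perpPoly n f)
          /ₘ (X ^ n - 1) + reflect n h * ((a * perpPoly n g + b * 0) /ₘ (X ^ n - 1))), ?_⟩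
      linear_combination (-(((a * (-(reflect n h) * perpPoly n g) + b * perpPoly n f)
          /ₘ (X ^ n - 1)) + reflect n h * ((a * perpPoly n g + b * 0) /ₘ (X ^ n - 1)))) * hc
    · rw [hpx2, modByMonic_sub hn]
      obtain ⟨c, hc⟩ := hMdvdg
      refine ⟨a - c * ((a * perpPoly n g + b * 0) /ₘ (X ^ n - 1)), ?_⟩
      linear_combination (-((a * perpPoly n g + b * 0) /ₘ (X ^ n - 1))) * hc

end
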